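/- arXiv:1309.2524 — 2 statements merged into one kernel-verified Lean document; each statement's English description precedes it below -/
import Mathlib

section
/- The space X_crs is contractible: there is a homotopy h : X_crs × [0,1] → X_crs from the identity map to the constant map at the origin x. -/
open Set Topology Filter

noncomputable section

/-- The closed unit disk. -/
def D : Type := {z : ℂ // ‖z‖ ≤ 1}

instance : TopologicalSpace D := instTopologicalSpaceSubtype

/-- The wedge point on each disk. -/
def basept : D := ⟨1, by norm_num⟩

/-- The outer point (outer 0-cell) on each disk. -/
def outerpt : D := ⟨-1, by norm_num⟩

/-- Wedge relation: glue all copies of the base point together. -/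
def wsetoid : Setoid (ℕ × D) where
  r p q := p = q ∨ (p.2 = basept ∧ q.2 = basept)
  iseqv := by
    constructor
    · intro p; exact Or.inl rfl
    · rintro p q (rfl | ⟨h1, h2⟩)
      · exact Or.inl rfl
      · exact Or.inr ⟨h2, h1⟩
    · rintro p q r (rfl | ⟨h1, h2⟩) (rfl | ⟨h3, h4⟩)
      · exact Or.inl rfl
      · exact Or.inr ⟨h3, h4⟩
      · exact Or.inr ⟨h1, h2⟩
      · exact Or.inr ⟨h1, h4⟩

/-- The wedge of countably many closed 2-disks, with the weak (CW) topology. -/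
def X : Type := Quotient wsetoid

instance : TopologicalSpace X := instTopologicalSpaceQuotient

/-- The point of the `n`-th disk with disk-coordinate `z`. -/
def pt (n : ℕ) (z : D) : X := Quotient.mk wsetoid (n, z)

/-- The origin (the wedge point `x`). -/
def origin : X := pt 0 basept

/-- The outer 0-cell `e_n^0` of the `n`-th disk. -/
def outer (n : ℕ) : X := pt n outerpt

/-- The `n`-th closed 2-cell `C_n`. -/
def cell (n : ℕ) : Set X := Set.range (pt n)

/-- The open sets of the coarser topology `τ`: CW-open sets which either do not
contain the origin, or contain all but finitely many punctured cells `C_n \ {e_n^0}`. -/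
def crsOpen (U : Set X) : Prop :=
  IsOpen U ∧ (origin ∉ U ∨ {n : ℕ | ¬ (cell n \ {outer n} ⊆ U)}.Finite)

/-- The coarser topology `τ` on the wedge of disks. -/
def crsTop : TopologicalSpace X where
  IsOpen := crsOpen
  isOpen_univ := ⟨isOpen_univ, Or.inr (Set.Finite.subset Set.finite_empty
    (fun _ hn => absurd (Set.subset_univ _) hn))⟩
  isOpen_inter := by
    rintro U V ⟨hU, hU2⟩ ⟨hV, hV2⟩
    refine ⟨hU.inter hV, ?_⟩
    by_cases hx : origin ∈ U ∩ V
    · have h1 := hU2.resolve_left (fun h => h hx.1)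
      have h2 := hV2.resolve_left (fun h => h hx.2)
      refine Or.inr ((h1.union h2).subset ?_)
      intro n hn
      by_contra hc
      simp only [Set.mem_union, Set.mem_setOf_eq, not_or, not_not] at hc
      exact hn (Set.subset_inter hc.1 hc.2)
    · exact Or.inl hx
  isOpen_sUnion := by
    intro S hS
    refine ⟨isOpen_sUnion fun U hU => (hS U hU).1, ?_⟩
    by_cases hx : origin ∈ ⋃₀ S
    · obtain ⟨U, hUS, hxU⟩ := hx
      have h1 := (hS U hUS).2.resolve_left (fun h => h hxU)
      refine Or.inr (h1.subset ?_)
      intro n hn hsub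
      exact hn (hsub.trans (Set.subset_sUnion_of_mem hUS))
    · exact Or.inl hx


/-! ### Auxiliary development -/

section AuxProof

lemma norm_z_le (z : D) : ‖z.1‖ ≤ 1 := z.2

/-- The contraction on the disk: straight line from `z` to `1`. -/
def hD (z : D) (t : unitInterval) : D :=
  ⟨((1 - (t : ℝ) : ℝ) : ℂ) * z.1 + ((t : ℝ) : ℂ), by
    have h0 : (0:ℝ) ≤ (t:ℝ) := t.2.1
    have h1 : (t:ℝ) ≤ 1 := t.2.2
    calc ‖((1 - (t : ℝ) : ℝ) : ℂ) * z.1 + ((t : ℝ) : ℂ)‖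
        ≤ ‖((1 - (t : ℝ) : ℝ) : ℂ) * z.1‖ + ‖((t : ℝ) : ℂ)‖ := norm_add_le _ _
      _ = |1 - (t:ℝ)| * ‖z.1‖ + |(t:ℝ)| := by
          rw [norm_mul, Complex.norm_real, Complex.norm_real, Real.norm_eq_abs,
            Real.norm_eq_abs]
      _ ≤ |1 - (t:ℝ)| * 1 + |(t:ℝ)| := by
          gcongr; exact z.2
      _ = 1 := by
          rw [abs_of_nonneg (by linarith), abs_of_nonneg h0]; ring⟩

lemma hD_val (z : D) (t : unitInterval) :
    (hD z t).1 = ((1 - (t : ℝ) : ℝ) : ℂ) * z.1 + ((t : ℝ) : ℂ) := rfl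

lemma hD_basept (t : unitInterval) : hD basept t = basept := by
  apply Subtype.ext
  show ((1 - (t : ℝ) : ℝ) : ℂ) * (1 : ℂ) + ((t : ℝ) : ℂ) = 1
  push_cast
  ring

lemma hD_zero (z : D) : hD z 0 = z := by
  apply Subtype.ext
  show ((1 - ((0:unitInterval) : ℝ) : ℝ) : ℂ) * z.1 + (((0:unitInterval) : ℝ) : ℂ) = z.1
  norm_num

lemma hD_one (z : D) : hD z 1 = basept := by
  apply Subtype.ext
  show ((1 - ((1:unitInterval) : ℝ) : ℝ) : ℂ) * z.1 + (((1:unitInterval) : ℝ) : ℂ) = 1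
  norm_num

/-- The contracting homotopy on the wedge. -/
def hmap (p : X × unitInterval) : X :=
  Quotient.lift (fun q : ℕ × D => pt q.1 (hD q.2 p.2))
    (by
      rintro ⟨n, z⟩ ⟨m, w⟩ (h | ⟨h1, h2⟩)
      · rw [h]
      · simp only at h1 h2
        subst h1; subst h2
        show pt n (hD basept p.2) = pt m (hD basept p.2)
        rw [hD_basept]
        exact Quotient.sound (Or.inr ⟨rfl, rfl⟩)) p.1

lemma hmap_pt (n : ℕ) (z : D) (t : unitInterval) :
    hmap (pt n z, t) = pt n (hD z t) := rfl

lemma pt_eq_iff {n m : ℕ} {z w : D} :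
    pt n z = pt m w ↔ (n, z) = (m, w) ∨ (z = basept ∧ w = basept) :=
  Quotient.eq

lemma pt_eq_iff' {n m : ℕ} {z w : D} :
    pt n z = pt m w ↔ (n = m ∧ z = w) ∨ (z = basept ∧ w = basept) := by
  rw [pt_eq_iff, Prod.ext_iff]

lemma pt_basept (n : ℕ) : pt n basept = origin :=
  Quotient.sound (Or.inr ⟨rfl, rfl⟩)

lemma basept_ne_outerpt : basept ≠ outerpt := by
  intro h
  have : (1 : ℂ) = -1 := congrArg Subtype.val h
  norm_num at this

lemma pt_eq_origin_iff {n : ℕ} {z : D} : pt n z = origin ↔ z = basept := by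
  constructor
  · intro h
    rcases pt_eq_iff'.mp h with ⟨_, h2⟩ | ⟨h1, _⟩
    · exact h2
    · exact h1
  · rintro rfl; exact pt_basept n

lemma pt_eq_outer_iff {n m : ℕ} {z : D} : pt n z = outer m ↔ n = m ∧ z = outerpt := by
  constructor
  · intro h
    rcases pt_eq_iff'.mp h with ⟨h1, h2⟩ | ⟨_, h2⟩
    · exact ⟨h1, h2⟩
    · exact absurd h2.symm basept_ne_outerpt
  · rintro ⟨rfl, rfl⟩; rfl

/-- CW-openness via the quotient map. -/
lemma isOpen_X_iff {U : Set X} :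
    IsOpen U ↔ IsOpen {p : ℕ × D | pt p.1 p.2 ∈ U} := by
  constructor
  · intro h
    exact h.preimage (continuous_quotient_mk')
  · intro h
    exact isOpen_coinduced.mpr h

/-- Slicewise-open sets of `ℕ × D` are open. -/
lemma isOpen_slices {S : ℕ → Set D} (hS : ∀ n, IsOpen (S n)) :
    IsOpen {p : ℕ × D | p.2 ∈ S p.1} := by
  have : {p : ℕ × D | p.2 ∈ S p.1} = ⋃ n, ({n} : Set ℕ) ×ˢ S n := by
    ext ⟨n, z⟩
    simp [Set.mem_prod]
  rw [this]
  exact isOpen_iUnion fun n => (isOpen_discrete _).prod (hS n)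

/-- ε-characterization of openness at a point of `ℕ × D`. -/
lemma exists_eps {T : Set (ℕ × D)} (hT : IsOpen T) {m : ℕ} {w : D} (hw : (m, w) ∈ T) :
    ∃ ε > 0, ∀ w' : D, ‖w'.1 - w.1‖ < ε → (m, w') ∈ T := by
  have hg : Continuous (fun w' : D => ((m, w') : ℕ × D)) :=
    continuous_const.prodMk continuous_id
  have h1 : IsOpen ((fun w' : D => ((m, w') : ℕ × D)) ⁻¹' T) := hT.preimage hg
  change @IsOpen D (TopologicalSpace.induced (Subtype.val : D → ℂ) inferInstance)
    ((fun w' : D => ((m, w') : ℕ × D)) ⁻¹' T) at h1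
  rw [isOpen_induced_iff] at h1
  obtain ⟨T', hT', hTT⟩ := h1
  have hwT' : w.1 ∈ T' := by
    have : w ∈ Subtype.val ⁻¹' T' := (Set.ext_iff.mp hTT w).mpr hw
    exact this
  obtain ⟨ε, hε, hball⟩ := Metric.isOpen_iff.mp hT' w.1 hwT'
  refine ⟨ε, hε, fun w' h => ?_⟩
  have h2 : w' ∈ Subtype.val ⁻¹' T' := hball (by rwa [Metric.mem_ball, Complex.dist_eq])
  replace h2 := (Set.ext_iff.mp hTT w').mp h2
  exact h2

lemma isOpen_D_norm_lt (c : ℂ) (r : ℝ) : IsOpen {w : D | ‖w.1 - c‖ < r} := by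
  have : {w : D | ‖w.1 - c‖ < r} = Subtype.val ⁻¹' (Metric.ball c r) := by
    ext w; simp [Metric.mem_ball, Complex.dist_eq]
    show _ ↔ dist w.1 c < r
    rw [Complex.dist_eq]
  rw [this]
  exact Metric.isOpen_ball.preimage continuous_subtype_val

lemma isOpen_D_ne (c : D) : IsOpen {w : D | w ≠ c} := by
  have : {w : D | w ≠ c} = Subtype.val ⁻¹' ({c.1}ᶜ) := by
    ext w
    simp only [Set.mem_setOf_eq, Set.mem_preimage, Set.mem_compl_iff, Set.mem_singleton_iff]
    exact not_congr ⟨fun h => congrArg Subtype.val h, fun h => Subtype.ext h⟩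
  rw [this]
  exact (isOpen_compl_singleton).preimage continuous_subtype_val

/-- Images of open sets avoiding the basepoint are CW-open and avoid the origin. -/
lemma crsOpen_image {m : ℕ} {S : Set D} (hS : IsOpen S) (hb : basept ∉ S) :
    crsOpen (pt m '' S) := by
  have hpre : {p : ℕ × D | pt p.1 p.2 ∈ pt m '' S} =
      {p : ℕ × D | p.2 ∈ (fun n => if n = m then S else ∅) p.1} := by
    ext ⟨k, v⟩
    simp only [Set.mem_setOf_eq, Set.mem_image]
    constructor
    · rintro ⟨w, hwS, hw⟩
      rcases pt_eq_iff'.mp hw.symm with ⟨h1, h2⟩ | ⟨h1, h2⟩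
      · obtain rfl := h1; obtain rfl := h2
        simp [hwS]
      · exact absurd (h2 ▸ hwS) hb
    · intro hv
      by_cases hk : k = m
      · subst hk
        simp only [if_pos rfl] at hv
        exact ⟨v, hv, rfl⟩
      · simp [hk] at hv
  have horig : origin ∉ pt m '' S := by
    rintro ⟨w, hwS, hw⟩
    exact hb ((pt_eq_origin_iff.mp hw) ▸ hwS)
  refine ⟨isOpen_X_iff.mpr ?_, Or.inl horig⟩
  rw [hpre]
  exact isOpen_slices (S := fun n => if n = m then S else ∅)
    (fun n => by by_cases hn : n = m <;> simp [hn, hS])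

lemma unitInterval_coe_nonneg (t : unitInterval) : (0:ℝ) ≤ (t:ℝ) := t.2.1
lemma unitInterval_coe_le_one (t : unitInterval) : (t:ℝ) ≤ 1 := t.2.2

/-- The key estimate: movement of the homotopy on disk coordinates. -/
lemma hD_dist (z w : D) (t s : unitInterval) :
    ‖(hD w s).1 - (hD z t).1‖ ≤ ‖w.1 - z.1‖ + 2 * |(s:ℝ) - (t:ℝ)| := by
  have hkey : (hD w s).1 - (hD z t).1 =
      ((1 - (s:ℝ) : ℝ) : ℂ) * (w.1 - z.1) + (((t:ℝ) - (s:ℝ) : ℝ) : ℂ) * z.1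
        + (((s:ℝ) - (t:ℝ) : ℝ) : ℂ) := by
    rw [hD_val, hD_val]
    push_cast
    ring
  rw [hkey]
  calc ‖((1 - (s:ℝ) : ℝ) : ℂ) * (w.1 - z.1) + (((t:ℝ) - (s:ℝ) : ℝ) : ℂ) * z.1
        + (((s:ℝ) - (t:ℝ) : ℝ) : ℂ)‖
      ≤ ‖((1 - (s:ℝ) : ℝ) : ℂ) * (w.1 - z.1) + (((t:ℝ) - (s:ℝ) : ℝ) : ℂ) * z.1‖
        + ‖(((s:ℝ) - (t:ℝ) : ℝ) : ℂ)‖ := norm_add_le _ _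
    _ ≤ ‖((1 - (s:ℝ) : ℝ) : ℂ) * (w.1 - z.1)‖ + ‖(((t:ℝ) - (s:ℝ) : ℝ) : ℂ) * z.1‖
        + ‖(((s:ℝ) - (t:ℝ) : ℝ) : ℂ)‖ := by gcongr; exact norm_add_le _ _
    _ = |1 - (s:ℝ)| * ‖w.1 - z.1‖ + |(s:ℝ) - (t:ℝ)| * ‖z.1‖ + |(s:ℝ) - (t:ℝ)| := by
        rw [norm_mul, norm_mul, Complex.norm_real, Complex.norm_real, Complex.norm_real,
          Real.norm_eq_abs, Real.norm_eq_abs, Real.norm_eq_abs, abs_sub_comm ((t:ℝ)) ((s:ℝ))]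
    _ ≤ 1 * ‖w.1 - z.1‖ + |(s:ℝ) - (t:ℝ)| * 1 + |(s:ℝ) - (t:ℝ)| := by
        gcongr
        · rw [abs_of_nonneg (by linarith [unitInterval_coe_le_one s])]
          linarith [unitInterval_coe_nonneg s]
        · exact z.2
    _ = ‖w.1 - z.1‖ + 2 * |(s:ℝ) - (t:ℝ)| := by ring

/-- Estimate toward the basepoint. -/
lemma hD_dist_basept (w : D) (s : unitInterval) :
    ‖(hD w s).1 - 1‖ ≤ 2 * (1 - (s:ℝ)) := by
  have hkey : (hD w s).1 - 1 = ((1 - (s:ℝ) : ℝ) : ℂ) * (w.1 - 1) := by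
    rw [hD_val]; push_cast; ring
  rw [hkey, norm_mul, Complex.norm_real, Real.norm_eq_abs,
    abs_of_nonneg (by linarith [unitInterval_coe_le_one s])]
  have : ‖w.1 - 1‖ ≤ 2 := by
    calc ‖w.1 - 1‖ ≤ ‖w.1‖ + ‖(1:ℂ)‖ := norm_sub_le _ _
      _ ≤ 1 + 1 := by rw [norm_one]; gcongr; exact w.2
      _ = 2 := by norm_num
  calc (1 - (s:ℝ)) * ‖w.1 - 1‖ ≤ (1 - (s:ℝ)) * 2 := by
        gcongr; linarith [unitInterval_coe_le_one s]
    _ = 2 * (1 - (s:ℝ)) := by ring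

/-- Contraction estimate: distance to basepoint does not increase. -/
lemma hD_dist_basept' (w : D) (s : unitInterval) :
    ‖(hD w s).1 - 1‖ ≤ ‖w.1 - 1‖ := by
  have hkey : (hD w s).1 - 1 = ((1 - (s:ℝ) : ℝ) : ℂ) * (w.1 - 1) := by
    rw [hD_val]; push_cast; ring
  rw [hkey, norm_mul, Complex.norm_real, Real.norm_eq_abs,
    abs_of_nonneg (by linarith [unitInterval_coe_le_one s])]
  calc (1 - (s:ℝ)) * ‖w.1 - 1‖ ≤ 1 * ‖w.1 - 1‖ := by
        gcongr; linarith [unitInterval_coe_nonneg s]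
    _ = ‖w.1 - 1‖ := one_mul _

/-- The homotopy never hits the outer point at positive times (or if it started elsewhere). -/
lemma hD_ne_outerpt {w : D} (hw : w ≠ outerpt) (s : unitInterval) : hD w s ≠ outerpt := by
  intro h
  have hval : ((1 - (s:ℝ) : ℝ) : ℂ) * w.1 + ((s:ℝ) : ℂ) = -1 := congrArg Subtype.val h
  have hs0 : (0:ℝ) ≤ (s:ℝ) := s.2.1
  have hs1 : (s:ℝ) ≤ 1 := s.2.2
  have hnorm : ‖((1 - (s:ℝ) : ℝ) : ℂ) * w.1‖ = 1 + (s:ℝ) := by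
    have : ((1 - (s:ℝ) : ℝ) : ℂ) * w.1 = -1 - ((s:ℝ) : ℂ) := by
      rw [← hval]; ring
    rw [this]
    have : (-1 - ((s:ℝ) : ℂ)) = ((-1 - (s:ℝ) : ℝ) : ℂ) := by push_cast; ring
    rw [this, Complex.norm_real, Real.norm_eq_abs, abs_of_nonpos (by linarith)]
    ring
  have hle : ‖((1 - (s:ℝ) : ℝ) : ℂ) * w.1‖ ≤ 1 - (s:ℝ) := by
    rw [norm_mul, Complex.norm_real, Real.norm_eq_abs, abs_of_nonneg (by linarith)]
    calc (1 - (s:ℝ)) * ‖w.1‖ ≤ (1 - (s:ℝ)) * 1 :=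
          mul_le_mul_of_nonneg_left w.2 (by linarith)
      _ = 1 - (s:ℝ) := mul_one _
  have hs : (s:ℝ) = 0 := by rw [hnorm] at hle; linarith
  have hw1 : w.1 = -1 := by
    have := hval
    rw [hs] at this
    push_cast at this
    simpa using this
  exact hw (Subtype.ext hw1)

end AuxProof

/-- `X_crs` is contractible: there is a homotopy from the identity to the
constant map at the origin. -/
theorem crs_contractible :
    ∃ h : X × unitInterval → X,
      Continuous[@instTopologicalSpaceProd X unitInterval crsTop _, crsTop] h ∧
      (∀ y : X, h (y, 0) = y) ∧ (∀ y : X, h (y, 1) = origin) := by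
  refine ⟨hmap, ?_, ?_, ?_⟩
  · -- continuity
    refine continuous_def.mpr ?_
    intro U hU
    have hU' : crsOpen U := hU
    have hT : IsOpen {p : ℕ × D | pt p.1 p.2 ∈ U} := isOpen_X_iff.mp hU'.1
    refine (@isOpen_prod_iff X unitInterval crsTop _ _).mpr ?_
    intro y t hyt
    obtain ⟨⟨n, z⟩, rfl⟩ := Quotient.exists_rep y
    have hyt' : pt n (hD z t) ∈ U := hyt
    by_cases hzB : hD z t = basept
    · -- the homotopy value is the origin
      have horU : origin ∈ U := by rwa [hzB, pt_basept] at hyt'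
      by_cases hzb : z = basept
      · -- y is the origin: use the cofinitely-many-cells neighborhood
        subst hzb
        have hF : {k : ℕ | ¬ (cell k \ {outer k} ⊆ U)}.Finite :=
          hU'.2.resolve_left (fun h => h horU)
        set F := {k : ℕ | ¬ (cell k \ {outer k} ⊆ U)} with hFdef
        have hmT : ∀ m : ℕ, (m, basept) ∈ {p : ℕ × D | pt p.1 p.2 ∈ U} := by
          intro m
          show pt m basept ∈ U
          rwa [pt_basept]
        choose δ hδpos hδ using fun m => exists_eps hT (hmT m)
        have hb1 : (basept : D).1 = 1 := rfl
        set Bset := {y : X | ∃ m w, y = pt m w ∧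
          ((m ∈ F ∧ ‖w.1 - 1‖ < δ m) ∨ (m ∉ F ∧ w ≠ outerpt))} with hBdef
        have hPb : ∀ m : ℕ, (m ∈ F ∧ ‖(basept : D).1 - 1‖ < δ m) ∨
            (m ∉ F ∧ (basept : D) ≠ outerpt) := by
          intro m
          by_cases hm : m ∈ F
          · exact Or.inl ⟨hm, by rw [hb1]; simpa using hδpos m⟩
          · exact Or.inr ⟨hm, basept_ne_outerpt⟩
        have hpre : {p : ℕ × D | pt p.1 p.2 ∈ Bset} =
            {p : ℕ × D | p.2 ∈ (fun m => {v : D |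
              (m ∈ F ∧ ‖v.1 - 1‖ < δ m) ∨ (m ∉ F ∧ v ≠ outerpt)}) p.1} := by
          ext ⟨k, v⟩
          simp only [Set.mem_setOf_eq, hBdef]
          constructor
          · rintro ⟨m, w, hkv, hP⟩
            rcases pt_eq_iff'.mp hkv with ⟨rfl, rfl⟩ | ⟨h1, h2⟩
            · exact hP
            · rw [h1]; exact hPb k
          · intro hP
            exact ⟨k, v, rfl, hP⟩
        have hBopen : crsOpen Bset := by
          constructor
          · refine isOpen_X_iff.mpr ?_
            rw [hpre]
            refine isOpen_slices (S := fun m => {v : D |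
              (m ∈ F ∧ ‖v.1 - 1‖ < δ m) ∨ (m ∉ F ∧ v ≠ outerpt)}) ?_
            intro m
            show IsOpen {v : D | (m ∈ F ∧ ‖v.1 - 1‖ < δ m) ∨ (m ∉ F ∧ v ≠ outerpt)}
            by_cases hm : m ∈ F
            · have : {v : D | (m ∈ F ∧ ‖v.1 - 1‖ < δ m) ∨ (m ∉ F ∧ v ≠ outerpt)} =
                  {v : D | ‖v.1 - 1‖ < δ m} := by
                ext v; simp [hm]
              rw [this]
              exact isOpen_D_norm_lt 1 (δ m)
            · have : {v : D | (m ∈ F ∧ ‖v.1 - 1‖ < δ m) ∨ (m ∉ F ∧ v ≠ outerpt)} =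
                  {v : D | v ≠ outerpt} := by
                ext v; simp [hm]
              rw [this]
              exact isOpen_D_ne outerpt
          · refine Or.inr (hF.subset ?_)
            intro k hk
            by_contra hkF
            apply hk
            rintro y ⟨⟨w, rfl⟩, hy2⟩
            have hw : w ≠ outerpt := by
              intro h
              exact hy2 (by rw [h]; rfl)
            exact ⟨k, w, rfl, Or.inr ⟨hkF, hw⟩⟩
        refine ⟨Bset, Set.univ, hBopen, isOpen_univ, ?_, trivial, ?_⟩
        · exact ⟨n, basept, rfl, hPb n⟩
        · rintro ⟨y', s⟩ ⟨⟨m, w, rfl, hP⟩, -⟩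
          show pt m (hD w s) ∈ U
          rcases hP with ⟨hmF, hw⟩ | ⟨hmF, hw⟩
          · have := hδ m (hD w s) (by
              rw [hb1]
              exact lt_of_le_of_lt (hD_dist_basept' w s) hw)
            exact this
          · have hsub : cell m \ {outer m} ⊆ U := not_not.mp hmF
            apply hsub
            refine ⟨⟨hD w s, rfl⟩, ?_⟩
            intro hmem
            have : pt m (hD w s) = outer m := hmem
            exact hD_ne_outerpt hw s (pt_eq_outer_iff.mp this).2
      · -- z ≠ basept, so t = 1: shrink the whole cell near time 1
        have hval : ((1 - (t:ℝ) : ℝ) : ℂ) * z.1 + ((t:ℝ) : ℂ) = 1 :=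
          congrArg Subtype.val hzB
        have hfac : ((1 - (t:ℝ) : ℝ) : ℂ) * (z.1 - 1) = 0 := by
          push_cast at hval ⊢
          linear_combination hval
        have ht1 : (t:ℝ) = 1 := by
          rcases mul_eq_zero.mp hfac with h | h
          · have : (1 - (t:ℝ) : ℝ) = 0 := by exact_mod_cast h
            linarith
          · exfalso
            apply hzb
            apply Subtype.ext
            have : z.1 = 1 := by linear_combination h
            exact this
        have hnT : (n, basept) ∈ {p : ℕ × D | pt p.1 p.2 ∈ U} := by
          show pt n basept ∈ U
          rwa [pt_basept]
        obtain ⟨ε, hε, hball⟩ := exists_eps hT hnT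
        refine ⟨pt n '' {w : D | w ≠ basept}, Metric.ball t (ε/4),
          crsOpen_image (isOpen_D_ne basept) (fun h => h rfl), Metric.isOpen_ball,
          ⟨z, hzb, rfl⟩, Metric.mem_ball_self (by linarith), ?_⟩
        rintro ⟨y', s⟩ ⟨⟨w, hw, rfl⟩, hs⟩
        show pt n (hD w s) ∈ U
        refine hball (hD w s) ?_
        have hdist : |(s:ℝ) - (t:ℝ)| < ε/4 := by
          rw [Metric.mem_ball, Subtype.dist_eq, Real.dist_eq] at hs
          exact hs
        have h1s : 1 - (s:ℝ) < ε/4 := by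
          rw [ht1] at hdist
          have := abs_lt.mp hdist
          linarith [this.1]
        calc ‖(hD w s).1 - (basept : D).1‖ = ‖(hD w s).1 - 1‖ := rfl
          _ ≤ 2 * (1 - (s:ℝ)) := hD_dist_basept w s
          _ < ε := by linarith
    · -- the homotopy value is not the origin: standard continuity neighborhood
      have hmem : (n, hD z t) ∈ {p : ℕ × D | pt p.1 p.2 ∈ U} := hyt'
      obtain ⟨ε, hε, hball⟩ := exists_eps hT hmem
      have hzb : z ≠ basept := by
        intro h
        rw [h, hD_basept] at hzB
        exact hzB rfl
      refine ⟨pt n '' {w : D | ‖w.1 - z.1‖ < ε/4 ∧ w ≠ basept}, Metric.ball t (ε/4),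
        ?_, Metric.isOpen_ball, ⟨z, ⟨by simpa using by positivity, hzb⟩, rfl⟩,
        Metric.mem_ball_self (by linarith), ?_⟩
      · refine crsOpen_image ?_ (fun h => h.2 rfl)
        have : {w : D | ‖w.1 - z.1‖ < ε/4 ∧ w ≠ basept} =
            {w : D | ‖w.1 - z.1‖ < ε/4} ∩ {w : D | w ≠ basept} := rfl
        rw [this]
        exact (isOpen_D_norm_lt z.1 (ε/4)).inter (isOpen_D_ne basept)
      · rintro ⟨y', s⟩ ⟨⟨w, ⟨hw1, hw2⟩, rfl⟩, hs⟩
        show pt n (hD w s) ∈ U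
        refine hball (hD w s) ?_
        have hdist : |(s:ℝ) - (t:ℝ)| < ε/4 := by
          rw [Metric.mem_ball, Subtype.dist_eq, Real.dist_eq] at hs
          exact hs
        have := hD_dist z w t s
        linarith
  · intro y
    obtain ⟨⟨n, z⟩, rfl⟩ := Quotient.exists_rep y
    show pt n (hD z 0) = pt n z
    rw [hD_zero]
  · intro y
    obtain ⟨⟨n, z⟩, rfl⟩ := Quotient.exists_rep y
    show pt n (hD z 1) = origin
    rw [hD_one, pt_basept]

end
end

section
/- Every point y ≠ x of X_crs and the origin x can be separated: there exist disjoint τ-open sets U ∋ x and V ∋ y such that V meets only one closed 2-cell and U contains all the remaining closed 2-cells. -/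
open Set Topology Filter

noncomputable section

lemma pt_exact {n m : ℕ} {z w : D} (h : pt n z = pt m w) :
    (n, z) = (m, w) ∨ (z = basept ∧ w = basept) :=
  Quotient.exact h

lemma isOpen_X_iff_s17 {U : Set X} :
    IsOpen U ↔ IsOpen (Quotient.mk wsetoid ⁻¹' U) :=
  Iff.rfl

lemma preimage_pt_image {n₀ : ℕ} {A : Set D} (hA : basept ∉ A) :
    Quotient.mk wsetoid ⁻¹' (pt n₀ '' A) = {p : ℕ × D | p.1 = n₀ ∧ p.2 ∈ A} := by
  ext ⟨n, w⟩
  constructor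
  · rintro ⟨w', hw', heq⟩
    rcases pt_exact heq with h | ⟨h1, h2⟩
    · obtain ⟨h1, h2⟩ := Prod.mk.injEq .. ▸ h
      exact ⟨h1.symm, h2 ▸ hw'⟩
    · exact absurd (h1 ▸ hw') hA
  · rintro ⟨rfl, hw⟩
    exact ⟨w, hw, rfl⟩

lemma continuous_val_D : Continuous (Subtype.val : D → ℂ) :=
  continuous_subtype_val

/-- every point `y ≠ x` can be separated from the origin by disjoint τ-open
sets `U ∋ x`, `V ∋ y` such that `V` meets only one closed 2-cell while `U` contains all
the remaining closed 2-cells. -/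
theorem crs_separation (y : X) (hy : y ≠ origin) :
    ∃ U V : Set X, IsOpen[crsTop] U ∧ IsOpen[crsTop] V ∧ origin ∈ U ∧ y ∈ V ∧
      Disjoint U V ∧
      ∃ n₀ : ℕ, (∀ m, (V ∩ cell m).Nonempty → m = n₀) ∧
        ∀ m, m ≠ n₀ → cell m ⊆ U := by
  obtain ⟨⟨n₀, z⟩, hp⟩ := Quotient.exists_rep y
  subst hp
  have hy' : pt n₀ z ≠ origin := hy
  have hzb : z ≠ basept := by
    rintro rfl
    exact hy' (Quotient.sound (Or.inr ⟨rfl, rfl⟩))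
  have hz1 : z.1 ≠ (1 : ℂ) := fun h => hzb (Subtype.ext h)
  set ε : ℝ := dist (1 : ℂ) z.1 / 2 with hεdef
  have hε : 0 < ε := by
    have : (1 : ℂ) ≠ z.1 := fun h => hz1 h.symm
    have := dist_pos.mpr this
    positivity
  set S : Set D := Subtype.val ⁻¹' {c : ℂ | dist c z.1 < ε} with hSdef
  set K : Set D := Subtype.val ⁻¹' {c : ℂ | dist c z.1 ≤ ε} with hKdef
  have hSK : S ⊆ K := fun w hw => show dist w.1 z.1 ≤ ε from le_of_lt hw
  have hbK : basept ∉ K := by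
    intro h
    have h2 : dist (1 : ℂ) z.1 ≤ ε := h
    rw [hεdef] at h2
    linarith [dist_pos.mpr (show (1 : ℂ) ≠ z.1 from fun h => hz1 h.symm)]
  have hbS : basept ∉ S := fun h => hbK (hSK h)
  have hzS : z ∈ S := by
    show dist z.1 z.1 < ε
    rw [dist_self]; exact hε
  set V : Set X := pt n₀ '' S with hVdef
  set U : Set X := (pt n₀ '' K)ᶜ with hUdef
  -- openness of V
  have hVopen : IsOpen V := by
    rw [isOpen_X_iff_s17, hVdef]; erw [preimage_pt_image hbS]
    have : {p : ℕ × D | p.1 = n₀ ∧ p.2 ∈ S}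
        = (Prod.fst ⁻¹' {n₀}) ∩ (Prod.snd ⁻¹' S) := rfl
    rw [this]
    exact ((isOpen_discrete _).preimage continuous_fst).inter
      ((continuous_val_D.isOpen_preimage _ Metric.isOpen_ball).preimage continuous_snd)
  have hUopen : IsOpen U := by
    rw [isOpen_X_iff_s17]
    have : Quotient.mk wsetoid ⁻¹' U
        = ((Prod.fst ⁻¹' {n₀}) ∩ (Prod.snd ⁻¹' K))ᶜ := by
      rw [hUdef]; exact congrArg compl (preimage_pt_image hbK)
    rw [this]
    refine (IsClosed.inter ?_ ?_).isOpen_compl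
    · exact (isClosed_discrete _).preimage continuous_fst
    · exact (IsClosed.preimage continuous_val_D Metric.isClosed_closedBall).preimage continuous_snd
  -- origin not in images
  have horigK : origin ∉ pt n₀ '' K := by
    rintro ⟨w', hw', heq⟩
    rcases pt_exact heq with h | ⟨h1, _⟩
    · obtain ⟨_, h2⟩ := Prod.mk.injEq .. ▸ h
      exact hbK (h2 ▸ hw')
    · exact hbK (h1 ▸ hw')
  have horigV : origin ∉ V := by
    rintro ⟨w', hw', heq⟩
    rcases pt_exact heq with h | ⟨h1, _⟩
    · obtain ⟨_, h2⟩ := Prod.mk.injEq .. ▸ h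
      exact hbS (h2 ▸ hw')
    · exact hbS (h1 ▸ hw')
  -- cells other than n₀ are inside U
  have hcells : ∀ m, m ≠ n₀ → cell m ⊆ U := by
    rintro m hm _ ⟨w, rfl⟩ ⟨w', hw', heq⟩
    rcases pt_exact heq with h | ⟨h1, _⟩
    · exact hm (congrArg Prod.fst h).symm
    · exact hbK (h1 ▸ hw')
  refine ⟨U, V, ⟨hUopen, Or.inr ?_⟩, ⟨hVopen, Or.inl horigV⟩, horigK, ⟨z, hzS, rfl⟩,
    ?_, n₀, ?_, hcells⟩
  · refine Set.Finite.subset (Set.finite_singleton n₀) ?_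
    intro m hm
    by_contra hne
    exact hm ((Set.diff_subset.trans (hcells m hne)))
  · rw [Set.disjoint_left]
    rintro a ha ⟨w', hw', rfl⟩
    exact ha ⟨w', hSK hw', rfl⟩
  · rintro m ⟨a, ⟨w', hw', rfl⟩, w, hw⟩
    rcases pt_exact hw.symm with h | ⟨h1, _⟩
    · exact (congrArg Prod.fst h).symm
    · exact absurd (h1 ▸ hw') hbS


end
end
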